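/- DiVincenzo et al. criterion: let ρ be a state on ℂ^d ⊗ ℂ^d and let S be the linear map on d×d complex matrices defined by S(X)_{k,l} = d·Σ_{i,j} X_{i,j}·ρ_{(i,k),(j,l)} (the unique map with ρ = (1⊗S)(P₊)); set Λ(X) = (S(X))ᵀ. Then ρ is one-distillable if and only if Λ is not two-positive, i.e. if and only if there exists a positive semidefinite matrix M indexed by Fin 2 × Fin d such that (1₂⊗Λ)(M) is not positive semidefinite. -/

import Mathlib

open Matrix Kronecker BigOperators
open scoped ComplexOrder

noncomputable section

/-- `d × d` complex matrices. -/
abbrev Mat (d : ℕ) := Matrix (Fin d) (Fin d) ℂ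

/-- Matrices on `ℂ^d ⊗ ℂ^d`, indexed by `Fin d × Fin d`. -/
abbrev Mat2 (d : ℕ) := Matrix (Fin d × Fin d) (Fin d × Fin d) ℂ

/-- Partial transpose on Bob's system: `(M^{T_B})_{(i,k),(j,l)} = M_{(i,l),(j,k)}`. -/
def ptB {d : ℕ} (M : Mat2 d) : Mat2 d :=
  Matrix.of fun p q => M (p.1, q.2) (q.1, p.2)

/-- Schmidt rank of a vector `ψ : Fin d × Fin d → ℂ`: the rank of the `d × d`
matrix with `(i,j)` entry `ψ (i,j)`. -/
def schmidtRank {d : ℕ} (ψ : Fin d × Fin d → ℂ) : ℕ :=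
  (Matrix.of fun i j => ψ (i, j) : Mat d).rank

/-- A state: positive semidefinite with trace one. -/
def IsState {d : ℕ} (ρ : Mat2 d) : Prop := ρ.PosSemidef ∧ ρ.trace = 1

/-- One-distillability: some Schmidt-rank-≤2 vector has negative expectation on `ρ^{T_B}`. -/
def OneDistillable {d : ℕ} (ρ : Mat2 d) : Prop :=
  ∃ ψ : Fin d × Fin d → ℂ, schmidtRank ψ ≤ 2 ∧
    (star ψ ⬝ᵥ (ptB ρ).mulVec ψ).re < 0

/-- The rank-one matrix `|ψ⟩⟨ψ|`, with entries `ψ x * conj (ψ y)`. -/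
def outer {d : ℕ} (ψ : Fin d × Fin d → ℂ) : Mat2 d :=
  Matrix.vecMulVec ψ (star ψ)

/-- The maximally entangled projector `P₊`, `(P₊)_{(i,k),(j,l)} = (1/d)·δ_{ik}·δ_{jl}`. -/
def Pplus (d : ℕ) : Mat2 d :=
  Matrix.of fun p q =>
    ((if p.1 = p.2 then (1 : ℂ) else 0) * (if q.1 = q.2 then (1 : ℂ) else 0)) / d

/-- The flip operator `V_{(i,k),(j,l)} = δ_{il}·δ_{jk}`. -/
def flipOp (d : ℕ) : Mat2 d :=
  Matrix.of fun p q => if p.1 = q.2 ∧ q.1 = p.2 then (1 : ℂ) else 0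

/-- The operator `Z = Σ_i |ii⟩⟨ii|`, `Z_{(i,k),(j,l)} = δ_{ik}·δ_{jl}·δ_{ij}`. -/
def Zop (d : ℕ) : Mat2 d :=
  Matrix.of fun p q => if p.1 = p.2 ∧ q.1 = q.2 ∧ p.1 = q.1 then (1 : ℂ) else 0

/-- Partial trace over Alice: `(Tr_A M)_{k,l} = Σ_i M_{(i,k),(i,l)}`. -/
def trA {d : ℕ} (M : Mat2 d) : Mat d :=
  Matrix.of fun k l => ∑ i, M (i, k) (i, l)

/-- Alice's reduced state: `(ρ_A)_{i,j} = Σ_k ρ_{(i,k),(j,k)}`. -/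
def redA {d : ℕ} (ρ : Mat2 d) : Mat d :=
  Matrix.of fun i j => ∑ k, ρ (i, k) (j, k)

/-- Bob's reduced state: `(ρ_B)_{k,l} = Σ_i ρ_{(i,k),(i,l)}`. -/
def redB {d : ℕ} (ρ : Mat2 d) : Mat d := trA ρ

/-- `(1 ⊗ Λ)(M)`, acting with `Λ` on Bob's blocks. -/
def idTensor {d : ℕ} (Λ : Mat d → Mat d) (M : Mat2 d) : Mat2 d :=
  Matrix.of fun p q => Λ (Matrix.of fun k l => M (p.1, k) (q.1, l)) p.2 q.2

/-- `(Λ ⊗ 1)(M)`, acting with `Λ` on Alice's blocks. -/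
def tensorId {d : ℕ} (Λ : Mat d → Mat d) (M : Mat2 d) : Mat2 d :=
  Matrix.of fun p q => Λ (Matrix.of fun i j => M (i, p.2) (j, q.2)) p.1 q.1

/-- `(1_k ⊗ Λ)(M)` for `M` indexed by `Fin k × Fin d`. -/
def idTensorK {d : ℕ} (k : ℕ) (Λ : Mat d → Mat d)
    (M : Matrix (Fin k × Fin d) (Fin k × Fin d) ℂ) :
    Matrix (Fin k × Fin d) (Fin k × Fin d) ℂ :=
  Matrix.of fun p q => Λ (Matrix.of fun m n => M (p.1, m) (q.1, n)) p.2 q.2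

/-- Two-decomposable maps: `Λ(X) = Σᵢ Vᵢ · Xᵀ · Vᵢ†` with each `Vᵢ` of rank at most 2. -/
def TwoDecomposable {d : ℕ} (Λ : Mat d → Mat d) : Prop :=
  ∃ (n : ℕ) (V : Fin n → Mat d), (∀ i, (V i).rank ≤ 2) ∧
    ∀ X : Mat d, Λ X = ∑ i, V i * Xᵀ * (V i)ᴴ

/-- The diagonal part of a matrix (off-diagonal entries set to zero). -/
def diagPart {d : ℕ} (X : Mat d) : Mat d := Matrix.diagonal fun i => X i i

set_option maxRecDepth 8000



private lemma sum_fin_two_dite' {M : Type*} [AddCommMonoid M] (r : ℕ) (hr : r ≤ 2)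
    (g : Fin r → M) :
    (∑ a : Fin 2, if h : (a : ℕ) < r then g ⟨a, h⟩ else 0) = ∑ j : Fin r, g j := by
  interval_cases r <;> simp [Fin.sum_univ_two, Fin.sum_univ_succ]

private lemma sum_comm3' {M : Type*} [AddCommMonoid M] {α β γ : Type*} [Fintype α] [Fintype β]
    [Fintype γ] (f : α → β → γ → M) :
    (∑ i : α, ∑ j : β, ∑ r : γ, f i j r) = ∑ r : γ, ∑ i : α, ∑ j : β, f i j r :=
  (Finset.sum_congr rfl fun _ _ => Finset.sum_comm).trans Finset.sum_comm

private def reEquiv' {A B C D E F : Type*} : (A×B×C×D×E×F) ≃ (E×B×F×D×C×A) where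
  toFun p := (p.2.2.2.2.1, p.2.1, p.2.2.2.2.2, p.2.2.2.1, p.2.2.1, p.1)
  invFun q := (q.2.2.2.2.2, q.2.1, q.2.2.2.2.1, q.2.2.2.1, q.1, q.2.2.1)
  left_inv := fun ⟨_,_,_,_,_,_⟩ => rfl
  right_inv := fun ⟨_,_,_,_,_,_⟩ => rfl

private lemma sum_reorder6' {M : Type*} [AddCommMonoid M] {A B C D E F : Type*}
    [Fintype A] [Fintype B] [Fintype C] [Fintype D] [Fintype E] [Fintype F]
    (f : A → B → C → D → E → F → M) :
    (∑ a, ∑ b, ∑ c, ∑ d, ∑ e, ∑ g, f a b c d e g)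
      = ∑ e, ∑ b, ∑ g, ∑ d, ∑ c, ∑ a, f a b c d e g := by
  have h := Fintype.sum_equiv (reEquiv' (A := A) (B := B) (C := C) (D := D) (E := E) (F := F)).symm
    (fun q : E×B×F×D×C×A => f q.2.2.2.2.2 q.2.1 q.2.2.2.2.1 q.2.2.2.1 q.1 q.2.2.1)
    (fun p : A×B×C×D×E×F => f p.1 p.2.1 p.2.2.1 p.2.2.2.1 p.2.2.2.2.1 p.2.2.2.2.2)
    (fun q => rfl)
  simp only [Fintype.sum_prod_type] at h
  exact h.symm

private lemma factor_rank_le_two' {d : ℕ} (Ψ : Matrix (Fin d) (Fin d) ℂ) (h : Ψ.rank ≤ 2) :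
    ∃ u v : Fin 2 → Fin d → ℂ, ∀ i k, Ψ i k = ∑ a : Fin 2, u a i * v a k := by
  classical
  set W := Submodule.span ℂ (Set.range Ψᵀ) with hW
  have hr : Module.finrank ℂ W ≤ 2 := by
    rw [Matrix.rank_eq_finrank_span_cols] at h; exact h
  let b : Module.Basis (Fin (Module.finrank ℂ W)) ℂ W := Module.finBasis ℂ W
  have hcol : ∀ k : Fin d, Ψᵀ k ∈ W := fun k => Submodule.subset_span (Set.mem_range_self k)
  refine ⟨fun a i => if h : (a : ℕ) < Module.finrank ℂ W then (b ⟨a, h⟩ : Fin d → ℂ) i else 0,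
    fun a k => if h : (a : ℕ) < Module.finrank ℂ W then b.repr ⟨Ψᵀ k, hcol k⟩ ⟨a, h⟩ else 0,
    fun i k => ?_⟩
  have key := (sum_fin_two_dite' (Module.finrank ℂ W) hr
      (fun j => b.repr ⟨Ψᵀ k, hcol k⟩ j • b j)).trans (b.sum_repr ⟨Ψᵀ k, hcol k⟩)
  have h2 := congrArg (fun w : W => (w : Fin d → ℂ) i) key
  simp only [AddSubmonoidClass.coe_finset_sum, Finset.sum_apply] at h2
  rw [show Ψ i k = (Ψᵀ k) i from rfl, ← h2]
  refine Finset.sum_congr rfl fun a _ => ?_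
  by_cases hh : (a : ℕ) < Module.finrank ℂ W
  · simp [hh, mul_comm]
  · simp [hh]

/-- key quadratic-form identity -/
private lemma quad' {d : ℕ} (ρ : Mat2 d) (Λ : Mat d → Mat d)
    (hΛ : Λ = fun X : Mat d =>
      ((Matrix.of fun k l => (d : ℂ) * ∑ i, ∑ j, X i j * ρ (i, k) (j, l)) : Mat d)ᵀ)
    (χ x : Fin 2 × Fin d → ℂ) :
    star x ⬝ᵥ (idTensorK 2 Λ (Matrix.vecMulVec χ (star χ))).mulVec x
      = (d : ℂ) * (star (fun p : Fin d × Fin d =>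
          ∑ a : Fin 2, (starRingEnd ℂ) (χ (a, p.1)) * x (a, p.2)) ⬝ᵥ
          (ptB ρ).mulVec (fun p => ∑ a : Fin 2, (starRingEnd ℂ) (χ (a, p.1)) * x (a, p.2))) := by
  subst hΛ
  simp only [idTensorK, ptB, dotProduct, mulVec, Matrix.of_apply, transpose_apply,
    vecMulVec_apply, Pi.star_apply, Fintype.sum_prod_type, Finset.mul_sum, Finset.sum_mul,
    map_sum, _root_.map_mul, starRingEnd_apply, star_star, star_sum, star_mul']
  refine ((sum_reorder6' (fun (a : Fin 2) (k : Fin d) (b : Fin 2) (l : Fin d) (i : Fin d) (j : Fin d) =>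
    star (x (a,k)) * ((d:ℂ) * (χ (a,i) * star (χ (b,j)) * ρ (i,l) (j,k)) * x (b,l)))).trans ?_)
  refine Finset.sum_congr rfl fun i _ => Finset.sum_congr rfl fun k _ =>
    Finset.sum_congr rfl fun j _ => Finset.sum_congr rfl fun l _ =>
    Finset.sum_congr rfl fun b _ => Finset.sum_congr rfl fun a _ => ?_
  ring

private lemma herm' {d : ℕ} (ρ : Mat2 d) (hρ : ρ.IsHermitian) (Λ : Mat d → Mat d)
    (hΛ : Λ = fun X : Mat d =>
      ((Matrix.of fun k l => (d : ℂ) * ∑ i, ∑ j, X i j * ρ (i, k) (j, l)) : Mat d)ᵀ)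
    (M : Matrix (Fin 2 × Fin d) (Fin 2 × Fin d) ℂ) (hM : M.IsHermitian) :
    (idTensorK 2 Λ M).IsHermitian := by
  subst hΛ
  unfold Matrix.IsHermitian
  ext p q
  simp only [conjTranspose_apply, idTensorK, Matrix.of_apply, transpose_apply, star_mul',
    star_sum, map_sum, _root_.map_mul, star_natCast, hρ.apply, hM.apply]
  congr 1
  exact Finset.sum_comm

private lemma quad_real' {n : Type*} [Fintype n] (N : Matrix n n ℂ) (hN : N.IsHermitian)
    (x : n → ℂ) : star (star x ⬝ᵥ N.mulVec x) = star x ⬝ᵥ N.mulVec x := by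
  simp only [dotProduct, mulVec, star_sum, star_mul', star_star, Pi.star_apply, Finset.mul_sum, hN.apply]
  rw [Finset.sum_comm]
  exact Finset.sum_congr rfl fun p _ => Finset.sum_congr rfl fun q _ => by ring

theorem oneDistillable_iff_not_twoPositive (d : ℕ) (hd : 2 ≤ d)
    (ρ : Mat2 d) (hρ : IsState ρ) (S : Mat d → Mat d)
    (hS : S = fun X => Matrix.of fun k l =>
      (d : ℂ) * ∑ i, ∑ j, X i j * ρ (i, k) (j, l)) :
    OneDistillable ρ ↔
      ∃ M : Matrix (Fin 2 × Fin d) (Fin 2 × Fin d) ℂ, M.PosSemidef ∧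
        ¬ (idTensorK 2 (fun X => (S X)ᵀ) M).PosSemidef := by
  have hdpos : (0 : ℝ) < (d : ℝ) := by exact_mod_cast lt_of_lt_of_le (by norm_num) hd
  have hΛ : (fun X : Mat d => (S X)ᵀ) = fun X : Mat d =>
      ((Matrix.of fun k l => (d : ℂ) * ∑ i, ∑ j, X i j * ρ (i, k) (j, l)) : Mat d)ᵀ := by
    funext X; rw [hS]
  constructor
  · rintro ⟨ψ, hrank, hneg⟩
    obtain ⟨u, v, huv⟩ := factor_rank_le_two' (Matrix.of fun i j => ψ (i, j)) hrank
    set χ : Fin 2 × Fin d → ℂ := fun p => (starRingEnd ℂ) (u p.1 p.2) with hχ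
    set φ : Fin 2 × Fin d → ℂ := fun p => v p.1 p.2 with hφ
    have hψ : (fun p : Fin d × Fin d =>
        ∑ a : Fin 2, (starRingEnd ℂ) (χ (a, p.1)) * φ (a, p.2)) = ψ := by
      funext p
      have h1 := huv p.1 p.2
      simp only [Matrix.of_apply] at h1
      simp [hχ, hφ, ← h1]
    refine ⟨Matrix.vecMulVec χ (star χ), ?_, ?_⟩
    · have hcc : Matrix.vecMulVec χ (star χ)
          = (Matrix.replicateCol (Fin 1) χ) * (Matrix.replicateCol (Fin 1) χ)ᴴ := by
        rw [Matrix.vecMulVec_eq (Fin 1), Matrix.conjTranspose_replicateCol]; rfl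
      rw [hcc]
      exact Matrix.posSemidef_self_mul_conjTranspose _
    · intro hPSD
      have h0 := hPSD.dotProduct_mulVec_nonneg φ
      rw [quad' ρ _ hΛ χ φ, hψ] at h0
      have h2 := (Complex.le_def.mp h0).1
      simp only [Complex.zero_re] at h2
      have hre : ((d : ℂ) * (star ψ ⬝ᵥ (ptB ρ).mulVec ψ)).re
          = (d : ℝ) * (star ψ ⬝ᵥ (ptB ρ).mulVec ψ).re := by
        simp [Complex.mul_re]
      rw [hre] at h2
      exact absurd h2 (not_le.mpr (mul_neg_of_pos_of_neg hdpos hneg))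
  · rintro ⟨M, hM, hN⟩
    set Λ := fun X : Mat d => (S X)ᵀ with hΛdef
    have hH : (idTensorK 2 Λ M).IsHermitian := herm' ρ hρ.1.1 Λ hΛ M hM.1
    obtain ⟨x, hx⟩ : ∃ x, ¬ (0 : ℂ) ≤ star x ⬝ᵥ (idTensorK 2 Λ M).mulVec x := by
      by_contra h
      refine hN (Matrix.PosSemidef.of_dotProduct_mulVec_nonneg hH fun y => ?_)
      by_contra hy
      exact h ⟨y, hy⟩
    obtain ⟨B, hB⟩ : ∃ B : Matrix (Fin 2 × Fin d) (Fin 2 × Fin d) ℂ, M = Bᴴ * B := by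
      open scoped MatrixOrder in
      obtain ⟨X, hX, -, hXe⟩ := CFC.exists_sqrt_of_isSelfAdjoint_of_quasispectrumRestricts hM.1
        (QuasispectrumRestricts.nnreal_of_nonneg hM.nonneg)
      exact ⟨X, by rw [← hXe]; exact congrArg (· * X) hX.star_eq.symm⟩
    set χ : (Fin 2 × Fin d) → (Fin 2 × Fin d) → ℂ := fun r p => star (B r p) with hχ
    have hNsplit : ∀ p q, idTensorK 2 Λ M p q
        = ∑ r, idTensorK 2 Λ (Matrix.vecMulVec (χ r) (star (χ r))) p q := by
      intro p q
      rw [hΛ]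
      simp only [idTensorK, Matrix.of_apply, transpose_apply, vecMulVec_apply, Pi.star_apply,
        hB, Matrix.mul_apply, conjTranspose_apply, hχ, star_star, Finset.sum_mul,
        Finset.mul_sum]
      rw [sum_comm3']
    have hc : star x ⬝ᵥ (idTensorK 2 Λ M).mulVec x
        = ∑ r, star x ⬝ᵥ (idTensorK 2 Λ (Matrix.vecMulVec (χ r) (star (χ r)))).mulVec x := by
      simp only [dotProduct, mulVec, hNsplit, Finset.sum_mul, Finset.mul_sum]
      rw [sum_comm3']
    have hreal := quad_real' _ hH x
    have him : (star x ⬝ᵥ (idTensorK 2 Λ M).mulVec x).im = 0 :=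
      Complex.conj_eq_iff_im.mp hreal
    have hre : (star x ⬝ᵥ (idTensorK 2 Λ M).mulVec x).re < 0 := by
      by_contra h'
      exact hx (Complex.le_def.mpr ⟨by simpa using not_lt.mp h', by simp [him]⟩)
    rw [hc, Complex.re_sum] at hre
    obtain ⟨r, -, hr⟩ : ∃ r ∈ Finset.univ, (star x ⬝ᵥ
        (idTensorK 2 Λ (Matrix.vecMulVec (χ r) (star (χ r)))).mulVec x).re < 0 := by
      by_contra h'
      push_neg at h'
      exact absurd (Finset.sum_nonneg fun r hr => h' r hr) (not_le.mpr hre)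
    rw [quad' ρ Λ hΛ (χ r) x] at hr
    set ψ : Fin d × Fin d → ℂ :=
      fun p => ∑ a : Fin 2, (starRingEnd ℂ) (χ r (a, p.1)) * x (a, p.2) with hψ
    have hrψ : (star ψ ⬝ᵥ (ptB ρ).mulVec ψ).re < 0 := by
      have hmul : ((d : ℂ) * (star ψ ⬝ᵥ (ptB ρ).mulVec ψ)).re
          = (d : ℝ) * (star ψ ⬝ᵥ (ptB ρ).mulVec ψ).re := by
        simp [Complex.mul_re]
      rw [hmul] at hr
      by_contra h'
      exact absurd hr (not_lt.mpr (mul_nonneg hdpos.le (not_lt.mp h')))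
    refine ⟨ψ, ?_, hrψ⟩
    have hfac : (Matrix.of fun i j => ψ (i, j) : Mat d)
        = (Matrix.of fun i a => (starRingEnd ℂ) (χ r (a, i)) : Matrix (Fin d) (Fin 2) ℂ)
          * (Matrix.of fun a k => x (a, k) : Matrix (Fin 2) (Fin d) ℂ) := by
      ext i k
      simp [Matrix.mul_apply, hψ]
    rw [schmidtRank, hfac]
    exact le_trans (Matrix.rank_mul_le_left _ _) ((Matrix.rank_le_card_width _).trans_eq (Fintype.card_fin 2))
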